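/- arXiv:1306.5674 — 3 statements merged into one kernel-verified Lean document; each statement's English description precedes it below -/
import Mathlib

section
/- Let Assumption (A) be satisfied. Then there exists M_0 ≥ 1, independent of k, such that sup_{λ ∈ Ω_k} |λ − iω_k|^α ‖R(λ,A)‖ ≤ M_0 for every k ∈ I, where Ω_k = {λ ∈ ℂ : Re λ ≥ 0, 0 < |λ − iω_k| ≤ ε_A}. -/
open Complex Filter Topology MeasureTheory

noncomputable section

/-- A strongly continuous semigroup of bounded linear operators on `X`
(only the values at times `t ≥ 0` are relevant). -/
structure C0Semigroup (X : Type*) [NormedAddCommGroup X] [NormedSpace ℂ X] where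
  T : ℝ → X →L[ℂ] X
  map_zero : T 0 = 1
  map_add : ∀ s t : ℝ, 0 ≤ s → 0 ≤ t → T (s + t) = (T s).comp (T t)
  strong_continuity : ∀ x : X, ContinuousOn (fun t => T t x) (Set.Ici (0 : ℝ))

variable {X : Type*} [NormedAddCommGroup X] [NormedSpace ℂ X]

/-- `A` (an unbounded operator, i.e. a partially defined linear map) is the infinitesimal
generator of the semigroup `S`: the graph of `A` consists exactly of the pairs `(x, y)`
such that the orbit `t ↦ S.T t x` has right derivative `y` at `t = 0`. -/
def IsGenerator (A : X →ₗ.[ℂ] X) (S : C0Semigroup X) : Prop :=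
  ∀ x y : X, (x, y) ∈ A.graph ↔
    Tendsto (fun t : ℝ => (t : ℂ)⁻¹ • (S.T t x - x)) (nhdsWithin 0 (Set.Ioi 0)) (nhds y)

/-- Strong stability: `‖T(t)x‖ → 0` as `t → ∞` for every `x`. -/
def StronglyStable (S : C0Semigroup X) : Prop :=
  ∀ x : X, Tendsto (fun t => ‖S.T t x‖) atTop (nhds 0)

/-- Uniform boundedness of a semigroup. -/
def UniformlyBounded (S : C0Semigroup X) : Prop :=
  ∃ M : ℝ, ∀ t : ℝ, 0 ≤ t → ‖S.T t‖ ≤ M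

/-- The resolvent set of a partially defined linear operator `A`: those `l : ℂ` for which
`l - A` has a bounded everywhere-defined two-sided inverse. -/
def ResolventSet (A : X →ₗ.[ℂ] X) : Set ℂ :=
  { l | ∃ R : X →L[ℂ] X, (∀ x : X, (R x, l • R x - x) ∈ A.graph) ∧
      ∀ x : A.domain, R (l • (x : X) - A x) = x }

open scoped Classical in
/-- The resolvent operator `R(l, A) = (l - A)⁻¹` (junk value `0` if `l` is not in the
resolvent set). -/
noncomputable def resolventOp (A : X →ₗ.[ℂ] X) (l : ℂ) : X →L[ℂ] X :=
  if h : l ∈ ResolventSet A then h.choose else 0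

/-- The point spectrum (set of eigenvalues) of `A`. -/
def PointSpectrum (A : X →ₗ.[ℂ] X) : Set ℂ :=
  { l | ∃ x : A.domain, (x : X) ≠ 0 ∧ A x = l • (x : X) }

/-- The continuous spectrum of `A`: points `l ∉ ρ(A)` such that `l - A` is injective
with dense range. -/
def ContinuousSpectrum (A : X →ₗ.[ℂ] X) : Set ℂ :=
  { l | l ∉ ResolventSet A ∧ (∀ x : A.domain, l • (x : X) - A x = 0 → (x : X) = 0) ∧
      Dense (Set.range fun x : A.domain => l • (x : X) - A x) }

/-- The operator `l - A` as a partially defined linear map with domain `D(A)`. -/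
def shiftPMap (l : ℂ) (A : X →ₗ.[ℂ] X) : X →ₗ.[ℂ] X :=
  ⟨A.domain, l • A.domain.subtype - A.toFun⟩

/-- The perturbed operator `A + P` (with `P` bounded), with domain `D(A)`. -/
def addBoundedOp (A : X →ₗ.[ℂ] X) (P : X →L[ℂ] X) : X →ₗ.[ℂ] X :=
  ⟨A.domain, A.toFun + P.toLinearMap.comp A.domain.subtype⟩

/-- An abstract system of (real) fractional powers of the (injective, sectorial) operator `A`:
a family `pow r` of partially defined operators with `pow 1 = A`, `pow 0 = I`, such that
`pow (-r)` is the inverse of `pow r`, and positive powers compose additively.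
(For sectorial operators this is satisfied by the fractional powers given by the sectorial
functional calculus.) -/
structure FracPowSystem (A : X →ₗ.[ℂ] X) where
  pow : ℝ → (X →ₗ.[ℂ] X)
  pow_one : pow 1 = A
  pow_zero_domain : (pow 0).domain = ⊤
  pow_zero_apply : ∀ x : (pow 0).domain, pow 0 x = (x : X)
  pow_neg : ∀ r : ℝ, ∀ x y : X, (x, y) ∈ (pow r).graph ↔ (y, x) ∈ (pow (-r)).graph
  pow_add : ∀ r s : ℝ, 0 ≤ r → 0 ≤ s → ∀ x y z : X,
    (x, y) ∈ (pow s).graph → (y, z) ∈ (pow r).graph → (x, z) ∈ (pow (r + s)).graph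

/-- Polynomial stability with exponent `α` of the semigroup `S` generated by `A`:
`S` is uniformly bounded, `σ(A) ∩ iℝ = ∅`, and `‖T(t) A⁻¹‖ ≤ M t^{-1/α}` for `t > 0`
(here `A⁻¹ = -R(0,A)`). -/
def PolynomiallyStable (S : C0Semigroup X) (A : X →ₗ.[ℂ] X) (α : ℝ) : Prop :=
  UniformlyBounded S ∧ (∀ ω : ℝ, ((ω : ℂ) * Complex.I) ∈ ResolventSet A) ∧
    ∃ M : ℝ, 1 ≤ M ∧ ∀ t : ℝ, 0 < t → ‖(S.T t).comp (-(resolventOp A 0))‖ ≤ M / t ^ (1 / α)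

end

section StmtAux

variable {X : Type*} [NormedAddCommGroup X] [NormedSpace ℂ X]

/-- The defining property of the resolvent operator of `A` at `l`. -/
def IsRes (A : X →ₗ.[ℂ] X) (l : ℂ) (R : X →L[ℂ] X) : Prop :=
  (∀ x : X, (R x, l • R x - x) ∈ A.graph) ∧ ∀ x : A.domain, R (l • (x : X) - A x) = x

theorem IsRes.mem {A : X →ₗ.[ℂ] X} {l : ℂ} {R : X →L[ℂ] X} (h : IsRes A l R) :
    l ∈ ResolventSet A := ⟨R, h.1, h.2⟩

theorem isRes_unique {A : X →ₗ.[ℂ] X} {l : ℂ} {R1 R2 : X →L[ℂ] X}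
    (h1 : IsRes A l R1) (h2 : IsRes A l R2) : R1 = R2 := by
  ext x
  obtain ⟨y, hy1, hy2⟩ := (A.mem_graph_iff).mp (h2.1 x)
  have h := h1.2 y
  rw [hy1, hy2] at h
  simpa [sub_sub_cancel] using h

theorem resolventOp_isRes {A : X →ₗ.[ℂ] X} {l : ℂ} (h : l ∈ ResolventSet A) :
    IsRes A l (resolventOp A l) := by
  rw [resolventOp, dif_pos h]
  exact ⟨h.choose_spec.1, h.choose_spec.2⟩

theorem IsRes.resolventOp_eq {A : X →ₗ.[ℂ] X} {l : ℂ} {R : X →L[ℂ] X} (h : IsRes A l R) :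
    resolventOp A l = R :=
  isRes_unique (resolventOp_isRes h.mem) h

theorem neumann {A : X →ₗ.[ℂ] X} [CompleteSpace X] {l μ : ℂ} (hl : l ∈ ResolventSet A)
    (h : ‖(l - μ) • resolventOp A l‖ < 1) : μ ∈ ResolventSet A := by
  set r := resolventOp A l with hr
  obtain ⟨h1, h2⟩ := resolventOp_isRes hl
  set a : X →L[ℂ] X := (l - μ) • r with ha
  set u : (X →L[ℂ] X)ˣ := Units.oneSub a h with hu
  set B : X →L[ℂ] X := ↑u⁻¹ with hB
  have hBa : (1 - a) * B = 1 := u.mul_inv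
  have haB : B * (1 - a) = 1 := u.inv_mul
  have har : a * r = r * a := by rw [ha, smul_mul_assoc, mul_smul_comm]
  have h1ar : (1 - a) * r = r * (1 - a) := by
    rw [sub_mul, mul_sub, one_mul, mul_one, har]
  have hcomm : r * B = B * r := by
    calc r * B = (B * (1 - a)) * (r * B) := by rw [haB, one_mul]
      _ = B * ((1 - a) * r * B) := by simp only [mul_assoc]
      _ = B * (r * ((1 - a) * B)) := by rw [h1ar, mul_assoc]
      _ = B * r := by rw [hBa, mul_one]
  have key : ∀ x : X, B x - x = (l - μ) • r (B x) := by
    intro x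
    have hx : ((1 - a) * B) x = x := by rw [hBa]; rfl
    have hx' : B x - a (B x) = x := by
      simpa [ContinuousLinearMap.mul_apply, ContinuousLinearMap.sub_apply] using hx
    rw [ha] at hx'
    simp only [ContinuousLinearMap.smul_apply] at hx'
    linear_combination (norm := module) hx'
  refine ⟨r.comp B, ?_, ?_⟩
  · intro x
    have hg := h1 (B x)
    have : l • r (B x) - B x = μ • r (B x) - x := by
      have := key x
      have hsub : (l - μ) • r (B x) = l • r (B x) - μ • r (B x) := sub_smul l μ _
      rw [hsub] at this
      linear_combination (norm := module) -this
    rw [this] at hg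
    exact hg
  · intro x
    have hsplit : μ • (x : X) - A x = (l • (x : X) - A x) + (μ - l) • (x : X) := by
      rw [sub_smul]; abel
    have hrB : ∀ y : X, r (B y) = B (r y) := by
      intro y
      have : (r * B) y = (B * r) y := by rw [hcomm]
      simpa [ContinuousLinearMap.mul_apply] using this
    have : r.comp B (μ • (x : X) - A x)
        = B (r (l • (x : X) - A x)) + (μ - l) • B (r (x : X)) := by
      simp only [ContinuousLinearMap.comp_apply, hsplit, map_add, ContinuousLinearMap.map_smul,
        hrB]
    rw [this, h2 x, ← hrB]
    have := key (x : X)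
    have h' : (μ - l) • r (B (x : X)) = -((l - μ) • r (B (x : X))) := by
      rw [← neg_smul, neg_sub]
    rw [h']
    linear_combination (norm := module) this

theorem unif_bound [CompleteSpace X] (S : C0Semigroup X) (hstab : StronglyStable S) :
    ∃ M : ℝ, 1 ≤ M ∧ ∀ t : ℝ, 0 ≤ t → ‖S.T t‖ ≤ M := by
  have hpt : ∀ x : X, ∃ C : ℝ, ∀ t : Set.Ici (0 : ℝ), ‖S.T t x‖ ≤ C := by
    intro x
    have h1 : ∀ᶠ t in atTop, ‖S.T t x‖ < 1 :=
      (hstab x).eventually_lt_const one_pos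
    obtain ⟨N, hN⟩ := h1.exists_forall_of_atTop
    obtain ⟨C, hC⟩ := (isCompact_Icc (a := (0:ℝ)) (b := max N 0)).exists_bound_of_continuousOn
      ((S.strong_continuity x).mono (Set.Icc_subset_Ici_self))
    refine ⟨max C 1, fun t => ?_⟩
    rcases le_total (t : ℝ) (max N 0) with h | h
    · exact le_trans (hC t ⟨t.2, h⟩) (le_max_left _ _)
    · exact le_trans (hN t (le_trans (le_max_left _ _) h)).le (le_max_right _ _)
  obtain ⟨C', hC'⟩ := banach_steinhaus (g := fun t : Set.Ici (0:ℝ) => S.T t) hpt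
  exact ⟨max C' 1, le_max_right _ _, fun t ht => le_trans (hC' ⟨t, ht⟩) (le_max_left _ _)⟩

theorem laplace_isRes [CompleteSpace X] (S : C0Semigroup X) (A : X →ₗ.[ℂ] X)
    (hgen : IsGenerator A S) {M : ℝ} (hM : ∀ t : ℝ, 0 ≤ t → ‖S.T t‖ ≤ M)
    {l : ℂ} (hl : 0 < l.re) :
    ∃ R : X →L[ℂ] X, IsRes A l R ∧ ‖R‖ ≤ M / l.re := by
  classical
  set g : X → ℝ → X := fun x t => Complex.exp (-(l * t)) • S.T t x with hg
  have hM0 : 0 ≤ M := le_trans (norm_nonneg _) (hM 0 le_rfl)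
  have hgcont : ∀ x, ContinuousOn (g x) (Set.Ici 0) := fun x =>
    ((Complex.continuous_exp.comp
      ((continuous_const.mul Complex.continuous_ofReal).neg)).continuousOn).smul
      (S.strong_continuity x)
  have hnorm : ∀ x : X, ∀ t : ℝ, 0 ≤ t →
      ‖g x t‖ ≤ Real.exp (-(l.re * t)) * (M * ‖x‖) := by
    intro x t ht
    rw [hg]
    simp only
    rw [norm_smul, Complex.norm_exp]
    have h1 : (-(l * (t:ℂ))).re = -(l.re * t) := by simp
    rw [h1]
    have h2 : ‖S.T t x‖ ≤ M * ‖x‖ :=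
      le_trans ((S.T t).le_opNorm x) (mul_le_mul_of_nonneg_right (hM t ht) (norm_nonneg x))
    exact mul_le_mul_of_nonneg_left h2 (Real.exp_pos _).le
  have hbint : IntegrableOn (fun t => Real.exp (-(l.re * t))) (Set.Ioi 0) volume := by
    simpa using exp_neg_integrableOn_Ioi 0 hl
  have hInt : ∀ x : X, IntegrableOn (g x) (Set.Ioi 0) volume := by
    intro x
    apply Integrable.mono' (hbint.mul_const (M * ‖x‖))
    · exact ((hgcont x).mono (Set.Ioi_subset_Ici le_rfl)).aestronglyMeasurable measurableSet_Ioi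
    · exact (ae_restrict_iff' measurableSet_Ioi).mpr
        (ae_of_all _ fun t ht => hnorm x t (le_of_lt ht))
  set Rl : X →ₗ[ℂ] X :=
    { toFun := fun x => ∫ t in Set.Ioi (0:ℝ), g x t
      map_add' := by
        intro x y
        rw [← integral_add (hInt x) (hInt y)]
        apply setIntegral_congr_fun measurableSet_Ioi
        intro t _
        simp [hg, smul_add]
      map_smul' := by
        intro c x
        rw [← integral_smul]
        apply setIntegral_congr_fun measurableSet_Ioi
        intro t _
        simp only [hg, RingHom.id_apply, ContinuousLinearMap.map_smul]
        rw [smul_comm] } with hRl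
  have hexpint : ∫ t in Set.Ioi (0:ℝ), Real.exp (-(l.re * t)) = (l.re)⁻¹ := by
    have h := integral_comp_mul_left_Ioi (fun u => Real.exp (-u)) 0 hl
    simp only [mul_zero] at h
    rw [h, integral_exp_neg_Ioi]
    simp
  have hRb : ∀ x : X, ‖Rl x‖ ≤ M / l.re * ‖x‖ := by
    intro x
    have h1 : ‖Rl x‖ ≤ ∫ t in Set.Ioi (0:ℝ), Real.exp (-(l.re * t)) * (M * ‖x‖) := by
      refine le_trans (norm_integral_le_integral_norm _) ?_
      refine integral_mono_ae (hInt x).norm (hbint.mul_const _) ?_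
      exact (ae_restrict_iff' measurableSet_Ioi).mpr
        (ae_of_all _ fun t ht => hnorm x t (le_of_lt ht))
    calc ‖Rl x‖ ≤ ∫ t in Set.Ioi (0:ℝ), Real.exp (-(l.re * t)) * (M * ‖x‖) := h1
      _ = (l.re)⁻¹ * (M * ‖x‖) := by rw [integral_mul_const, hexpint]
      _ = M / l.re * ‖x‖ := by field_simp
  set R : X →L[ℂ] X := Rl.mkContinuous (M / l.re) hRb with hR
  have hRapp : ∀ x, R x = ∫ t in Set.Ioi (0:ℝ), g x t := fun x => rfl
  have hRnorm : ‖R‖ ≤ M / l.re := Rl.mkContinuous_norm_le (div_nonneg hM0 hl.le) hRb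
  have hTR : ∀ s : ℝ, 0 ≤ s → ∀ x : X,
      S.T s (R x) = ∫ t in Set.Ioi (0:ℝ), Complex.exp (-(l * t)) • S.T (s + t) x := by
    intro s hs x
    rw [hRapp, ← ContinuousLinearMap.integral_comp_comm (S.T s) (hInt x)]
    apply setIntegral_congr_fun measurableSet_Ioi
    intro t ht
    simp only [hg]
    rw [S.map_add s t hs (le_of_lt ht), ContinuousLinearMap.map_smul]
    rfl
  have hsplit : ∀ s : ℝ, 0 < s → ∀ x : X,
      S.T s (R x) = Complex.exp (l * s) • (R x - ∫ t in Set.Ioc (0:ℝ) s, g x t) := by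
    intro s hs x
    rw [hTR s hs.le x]
    have h1 : Set.EqOn (fun t : ℝ => Complex.exp (-(l * t)) • S.T (s + t) x)
        (fun t : ℝ => Complex.exp (l * s) • g x (t + s)) (Set.Ioi 0) := by
      intro t _
      simp only [hg]
      have he : Complex.exp (-(l * (t:ℂ)))
          = Complex.exp (l * s) * Complex.exp (-(l * ((t + s : ℝ) : ℂ))) := by
        rw [← Complex.exp_add]
        congr 1
        push_cast
        ring_nf
      rw [add_comm s t, he, mul_smul]
    rw [setIntegral_congr_fun measurableSet_Ioi h1, integral_smul]
    congr 1
    have h2 : ∫ t in Set.Ioi (0:ℝ), g x (t + s) = ∫ t in Set.Ioi s, g x t := by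
      have hmp := (measurePreserving_add_right volume s).setIntegral_preimage_emb
        (MeasurableEquiv.addRight s).measurableEmbedding (g x) (Set.Ioi s)
      rw [← hmp]
      congr 1
      ext t
      simp
    have h3 : (∫ t in Set.Ioc (0:ℝ) s, g x t) + ∫ t in Set.Ioi s, g x t = R x := by
      rw [hRapp, ← setIntegral_union (Set.Ioc_disjoint_Ioi le_rfl) measurableSet_Ioi
        ((hInt x).mono_set Set.Ioc_subset_Ioi_self)
        ((hInt x).mono_set (Set.Ioi_subset_Ioi hs.le)), Set.Ioc_union_Ioi_eq_Ioi hs.le]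
    rw [h2]
    exact eq_sub_of_add_eq' h3
  have hL3 : ∀ x : X, Tendsto (fun s : ℝ => (s:ℂ)⁻¹ • ∫ t in Set.Ioc (0:ℝ) s, g x t)
      (nhdsWithin 0 (Set.Ioi 0)) (nhds x) := by
    intro x
    rw [Metric.tendsto_nhdsWithin_nhds]
    intro ε hε
    have hc : ContinuousWithinAt (g x) (Set.Ici 0) 0 := (hgcont x) 0 Set.self_mem_Ici
    rw [Metric.continuousWithinAt_iff] at hc
    obtain ⟨δ, hδ0, hδ⟩ := hc (ε/2) (by linarith)
    refine ⟨δ, hδ0, ?_⟩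
    intro s hs hsd
    have hs0 : (0:ℝ) < s := hs
    rw [Real.dist_eq, sub_zero] at hsd
    have hsδ : s < δ := lt_of_abs_lt hsd
    have hg0 : g x 0 = x := by
      simp only [hg]
      rw [S.map_zero]
      simp
    have hb : ∀ t ∈ Set.Ioc (0:ℝ) s, ‖g x t - x‖ ≤ ε/2 := by
      intro t ht
      have h1 := hδ (Set.mem_Ici.mpr ht.1.le)
        (by rw [Real.dist_eq, sub_zero, _root_.abs_of_pos ht.1]; exact lt_of_le_of_lt ht.2 hsδ)
      rw [hg0, dist_eq_norm] at h1
      exact h1.le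
    have hIoc : IntegrableOn (g x) (Set.Ioc 0 s) volume :=
      (hInt x).mono_set Set.Ioc_subset_Ioi_self
    have hxint : IntegrableOn (fun _ : ℝ => x) (Set.Ioc (0:ℝ) s) volume :=
      integrableOn_const measure_Ioc_lt_top.ne
    have hvol : (volume (Set.Ioc (0:ℝ) s)).toReal = s := by
      rw [Real.volume_Ioc, sub_zero, ENNReal.toReal_ofReal hs0.le]
    have hsub : (∫ t in Set.Ioc (0:ℝ) s, g x t) - s • x
        = ∫ t in Set.Ioc (0:ℝ) s, (g x t - x) := by
      rw [integral_sub hIoc hxint, setIntegral_const, measureReal_def, hvol]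
    have hnorm2 : ‖(∫ t in Set.Ioc (0:ℝ) s, g x t) - s • x‖ ≤ ε/2 * s := by
      rw [hsub]
      have := norm_setIntegral_le_of_norm_le_const (μ := volume) (C := ε/2)
        (measure_Ioc_lt_top) hb
      rwa [measureReal_def, hvol] at this
    rw [dist_eq_norm]
    have heq : (s:ℂ)⁻¹ • (∫ t in Set.Ioc (0:ℝ) s, g x t) - x
        = (s:ℂ)⁻¹ • ((∫ t in Set.Ioc (0:ℝ) s, g x t) - s • x) := by
      rw [smul_sub]
      congr 1
      rw [← Complex.coe_smul, smul_smul, inv_mul_cancel₀ (by exact_mod_cast hs0.ne'), one_smul]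
    rw [heq, norm_smul]
    have hns : ‖(s:ℂ)⁻¹‖ = s⁻¹ := by
      rw [norm_inv, Complex.norm_real, Real.norm_eq_abs, _root_.abs_of_pos hs0]
    rw [hns]
    calc s⁻¹ * ‖(∫ t in Set.Ioc (0:ℝ) s, g x t) - s • x‖ ≤ s⁻¹ * (ε/2 * s) := by
          exact mul_le_mul_of_nonneg_left hnorm2 (inv_nonneg.mpr hs0.le)
      _ = ε/2 := by field_simp
      _ < ε := by linarith
  have hL1 : Tendsto (fun s : ℝ => (s:ℂ)⁻¹ * (Complex.exp (l * s) - 1))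
      (nhdsWithin 0 (Set.Ioi 0)) (nhds l) := by
    have hd : HasDerivAt (fun s : ℝ => Complex.exp (l * s)) l 0 := by
      have h1 : HasDerivAt (fun s : ℝ => l * (s:ℂ)) l 0 := by
        simpa using ((hasDerivAt_id (0:ℝ)).ofReal_comp.const_mul l)
      simpa using h1.cexp
    have h2 := hasDerivAt_iff_tendsto_slope.mp hd
    have h3 : Tendsto (slope (fun s : ℝ => Complex.exp (l * s)) 0)
        (nhdsWithin 0 (Set.Ioi 0)) (nhds l) :=
      h2.mono_left (nhdsWithin_mono 0 (fun t ht => ne_of_gt ht))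
    refine h3.congr fun s => ?_
    rw [slope_def_module, Complex.real_smul]
    push_cast
    simp only [mul_zero, Complex.exp_zero, sub_zero]
  have hmain : ∀ x : X, Tendsto (fun s : ℝ => (s:ℂ)⁻¹ • (S.T s (R x) - R x))
      (nhdsWithin 0 (Set.Ioi 0)) (nhds (l • R x - x)) := by
    intro x
    have hL2 : Tendsto (fun s : ℝ => Complex.exp (l * s)) (nhdsWithin 0 (Set.Ioi 0))
        (nhds 1) := by
      have hcont : Continuous fun s : ℝ => Complex.exp (l * s) :=
        Complex.continuous_exp.comp (continuous_const.mul Complex.continuous_ofReal)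
      have := (hcont.tendsto 0).mono_left (nhdsWithin_le_nhds (s := Set.Ioi (0:ℝ)))
      simpa using this
    have hcomb := (hL1.smul_const (R x)).sub (hL2.smul (hL3 x))
    rw [one_smul] at hcomb
    refine Filter.Tendsto.congr' ?_ hcomb
    filter_upwards [self_mem_nhdsWithin] with s hs
    have hs0 : (0:ℝ) < s := hs
    rw [hsplit s hs0 x]
    set c := Complex.exp (l * (s:ℂ)) with hc
    set v := ∫ t in Set.Ioc (0:ℝ) s, g x t with hv
    module
  refine ⟨R, ⟨fun x => (hgen (R x) (l • R x - x)).mpr (hmain x), ?_⟩, hRnorm⟩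
  intro x
  have hx : Tendsto (fun t : ℝ => (t:ℂ)⁻¹ • (S.T t (x:X) - (x:X)))
      (nhdsWithin 0 (Set.Ioi 0)) (nhds (A x)) :=
    (hgen x (A x)).mp (A.mem_graph x)
  have h2 : Tendsto (fun t : ℝ => R ((t:ℂ)⁻¹ • (S.T t (x:X) - (x:X))))
      (nhdsWithin 0 (Set.Ioi 0)) (nhds (R (A x))) :=
    (R.continuous.tendsto _).comp hx
  have h3 : (fun t : ℝ => R ((t:ℂ)⁻¹ • (S.T t (x:X) - (x:X)))) =ᶠ[nhdsWithin 0 (Set.Ioi 0)]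
      fun t : ℝ => (t:ℂ)⁻¹ • (S.T t (R (x:X)) - R (x:X)) := by
    filter_upwards [self_mem_nhdsWithin] with t ht
    have ht0 : (0:ℝ) < t := ht
    rw [ContinuousLinearMap.map_smul, map_sub]
    congr 2
    rw [hRapp (S.T t (x:X)), hTR t ht0.le (x:X)]
    apply setIntegral_congr_fun measurableSet_Ioi
    intro u hu
    simp only [hg]
    congr 1
    rw [add_comm t u, S.map_add u t (le_of_lt hu) ht0.le]
    rfl
  have h5 : R (A x) = l • R (x:X) - (x:X) :=
    tendsto_nhds_unique (Filter.Tendsto.congr' h3 h2) (hmain (x:X))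
  calc R (l • (x:X) - A x) = l • R (x:X) - R (A x) := by
        rw [map_sub, ContinuousLinearMap.map_smul]
    _ = x := by rw [h5, sub_sub_cancel]

theorem resolvent_identity {A : X →ₗ.[ℂ] X} {l μ : ℂ}
    (hl : l ∈ ResolventSet A) (hμ : μ ∈ ResolventSet A) (x : X) :
    resolventOp A l x = (μ - l) • resolventOp A μ (resolventOp A l x) + resolventOp A μ x := by
  obtain ⟨c1, _⟩ := resolventOp_isRes hl
  obtain ⟨_, d2⟩ := resolventOp_isRes hμ
  obtain ⟨y, hy1, hy2⟩ := A.mem_graph_iff.mp (c1 x)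
  have h := d2 y
  rw [hy1, hy2] at h
  have harg : μ • resolventOp A l x - (l • resolventOp A l x - x)
      = (μ - l) • resolventOp A l x + x := by rw [sub_smul]; abel
  rw [harg] at h
  calc resolventOp A l x = resolventOp A μ ((μ - l) • resolventOp A l x + x) := h.symm
    _ = (μ - l) • resolventOp A μ (resolventOp A l x) + resolventOp A μ x := by
        rw [map_add, ContinuousLinearMap.map_smul]

end StmtAux

/-- (Lemma 3.5 of the paper.)  Under Assumption (A) the bound
`|λ - iω_k|^α ‖R(λ,A)‖ ≤ M₀` holds uniformly on the sets
`Ω_k = {λ : Re λ ≥ 0, 0 < |λ - iω_k| ≤ ε_A}`, with `M₀` independent of `k`. -/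
theorem stmt8
    {X : Type*} [NormedAddCommGroup X] [InnerProductSpace ℂ X] [CompleteSpace X]
    (S : C0Semigroup X) (A : X →ₗ.[ℂ] X)
    (hgen : IsGenerator A S) (hstab : StronglyStable S)
    {ι : Type*} [Fintype ι] (ωk : ι → ℝ)
    (dA : ℝ) (hdA : 0 < dA) (hgap : ∀ k l : ι, k ≠ l → dA ≤ |ωk k - ωk l|)
    (hspec : {l : ℂ | l ∉ ResolventSet A ∧ l.re = 0} =
      Set.range fun k : ι => (ωk k : ℂ) * Complex.I)
    (hcont : ∀ k : ι, ((ωk k : ℂ) * Complex.I) ∈ ContinuousSpectrum A)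
    (α MA εA : ℝ) (hα : 1 ≤ α) (hMA : 0 < MA)
    (hεA : 0 < εA) (hεA' : εA ≤ max 1 (dA / 3))
    (hres1 : ∀ k : ι, ∀ ω : ℝ, 0 < |ω - ωk k| → |ω - ωk k| ≤ εA →
      |ω - ωk k| ^ α * ‖resolventOp A ((ω : ℂ) * Complex.I)‖ ≤ MA)
    (hres2 : ∀ ω : ℝ, (∀ k : ι, εA < |ω - ωk k|) →
      ‖resolventOp A ((ω : ℂ) * Complex.I)‖ ≤ MA)
 :
    ∃ M0 : ℝ, 1 ≤ M0 ∧ ∀ k : ι, ∀ l : ℂ, 0 ≤ l.re →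
      0 < ‖l - (ωk k : ℂ) * Complex.I‖ → ‖l - (ωk k : ℂ) * Complex.I‖ ≤ εA →
      l ∈ ResolventSet A ∧
      ‖l - (ωk k : ℂ) * Complex.I‖ ^ α * ‖resolventOp A l‖ ≤ M0 := by
  obtain ⟨M, hM1, hMb⟩ := unif_bound S hstab
  have hM0 : 0 ≤ M := le_trans zero_le_one hM1
  have h2pos : (0:ℝ) < (2:ℝ) ^ α := Real.rpow_pos_of_pos two_pos α
  have h2ge1 : (1:ℝ) ≤ (2:ℝ) ^ α := Real.one_le_rpow one_le_two (by linarith)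
  set E : ℝ := (max 1 εA) ^ (α - 1) with hE
  have hEpos : 0 < E := Real.rpow_pos_of_pos (lt_of_lt_of_le one_pos (le_max_left _ _)) _
  set M0 : ℝ := 1 + (2:ℝ)^α * E * M + (2:ℝ)^α * (1+M) * MA with hM0def
  have hn1 : 0 ≤ (2:ℝ)^α * E * M := mul_nonneg (mul_nonneg h2pos.le hEpos.le) hM0
  have hn2 : 0 ≤ (2:ℝ)^α * (1+M) * MA := mul_nonneg (mul_nonneg h2pos.le (by linarith)) hMA.le
  have hM0ge : 1 ≤ M0 := by rw [hM0def]; linarith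
  have hMAleM0 : MA ≤ M0 := by
    have hge1 : (1:ℝ) ≤ (2:ℝ)^α * (1+M) := by nlinarith
    have := mul_le_mul_of_nonneg_right hge1 hMA.le
    rw [hM0def]; linarith
  -- Step 1: the imaginary axis points near `i ωk k` are in the resolvent set
  have himag : ∀ (k : ι) (ω : ℝ), 0 < |ω - ωk k| → |ω - ωk k| ≤ εA →
      ((ω : ℂ) * Complex.I) ∈ ResolventSet A := by
    intro k ω hω1 hω2
    by_contra hres
    have hmem : ((ω:ℂ) * Complex.I) ∈ {l : ℂ | l ∉ ResolventSet A ∧ l.re = 0} :=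
      ⟨hres, by simp⟩
    rw [hspec] at hmem
    obtain ⟨m, hm⟩ := hmem
    have hωm : ωk m = ω := by
      have h := mul_right_cancel₀ Complex.I_ne_zero hm
      exact_mod_cast h
    subst hωm
    have hmk : m ≠ k := by
      rintro rfl
      simp at hω1
    set ν : ℝ := ωk m - ωk k with hν
    set d : ℝ := |ν| with hd
    have hdpos : 0 < d := hω1
    have hdA_le : dA ≤ d := by rw [hd, hν]; exact hgap m k hmk
    have hdε : d ≤ εA := hω2
    have hdhalf : 0 < d/2 := by linarith
    have hpowpos : 0 < (d/2)^α := Real.rpow_pos_of_pos hdhalf α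
    set t : ℝ := min (d/2) (min (dA/2) ((d/2)^α / (2*MA))) with htdef
    have ht0 : 0 < t := lt_min hdhalf (lt_min (by linarith) (by positivity))
    have htd2 : t ≤ d/2 := min_le_left _ _
    have htdA : t ≤ dA/2 := le_trans (min_le_right _ _) (min_le_left _ _)
    have htpow : t ≤ (d/2)^α / (2*MA) := le_trans (min_le_right _ _) (min_le_right _ _)
    set ω' : ℝ := ωk k + (1 - t/d) * ν with hω'def
    have hω'k : |ω' - ωk k| = d - t := by
      have h1 : ω' - ωk k = (1 - t/d) * ν := by rw [hω'def]; ring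
      rw [h1, abs_mul, ← hd]
      rw [_root_.abs_of_nonneg (by
        have : t/d ≤ 1 := (div_le_one hdpos).mpr (by linarith)
        linarith)]
      field_simp
    have hω'm : |ω' - ωk m| = t := by
      have h1 : ω' - ωk m = -(t/d) * ν := by rw [hω'def, hν]; ring
      rw [h1, abs_mul, ← hd, abs_neg, _root_.abs_of_nonneg (by positivity : (0:ℝ) ≤ t/d)]
      field_simp
    have hω'pos : 0 < |ω' - ωk k| := by rw [hω'k]; linarith
    have hω'ε : |ω' - ωk k| ≤ εA := by rw [hω'k]; linarith
    have hne : ∀ n : ι, ω' ≠ ωk n := by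
      intro n hcontra
      rcases eq_or_ne n m with rfl | hnm
      · rw [hcontra, sub_self, abs_zero] at hω'm
        linarith
      · have h1 : dA ≤ |ωk m - ωk n| := hgap m n (Ne.symm hnm)
        have h2 : |ωk m - ωk n| ≤ |ωk m - ω'| + |ω' - ωk n| := abs_sub_le _ _ _
        have h3 : |ωk m - ω'| = t := by rw [abs_sub_comm]; exact hω'm
        have h4 : |ω' - ωk n| = 0 := by rw [hcontra, sub_self, abs_zero]
        linarith
    have hres' : ((ω' : ℂ) * Complex.I) ∈ ResolventSet A := by
      by_contra hc
      have h1 : ((ω':ℂ) * Complex.I) ∈ {l : ℂ | l ∉ ResolventSet A ∧ l.re = 0} :=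
        ⟨hc, by simp⟩
      rw [hspec] at h1
      obtain ⟨n, hn⟩ := h1
      have h2 : ωk n = ω' := by
        have h := mul_right_cancel₀ Complex.I_ne_zero hn
        exact_mod_cast h
      exact hne n h2.symm
    have hbnd := hres1 k ω' hω'pos hω'ε
    rw [hω'k] at hbnd
    have hdtpos : 0 < (d - t)^α := Real.rpow_pos_of_pos (by linarith) α
    have hRn : ‖resolventOp A ((ω':ℂ) * Complex.I)‖ ≤ MA / (d-t)^α := by
      rw [le_div_iff₀ hdtpos, mul_comm]
      exact hbnd
    have hkey : t * MA < (d - t)^α := by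
      have heq : (d/2)^α / (2*MA) * MA = (d/2)^α / 2 := by
        field_simp
      have ha : t * MA ≤ (d/2)^α / 2 := by
        have h := mul_le_mul_of_nonneg_right htpow hMA.le
        rw [heq] at h
        exact h
      have hbb : (d/2)^α ≤ (d - t)^α :=
        Real.rpow_le_rpow (by linarith) (by linarith) (by linarith)
      linarith
    have hsm : ‖(((ω':ℂ) * Complex.I) - ((ωk m : ℂ) * Complex.I))
        • resolventOp A ((ω':ℂ) * Complex.I)‖ < 1 := by
      rw [norm_smul]
      have hsc : ‖((ω':ℂ) * Complex.I) - ((ωk m : ℂ) * Complex.I)‖ = t := by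
        rw [← sub_mul, ← Complex.ofReal_sub]
        have : ‖((ω' - ωk m : ℝ) : ℂ) * Complex.I‖ = |ω' - ωk m| := by
          rw [norm_mul, Complex.norm_real, Complex.norm_I, mul_one, Real.norm_eq_abs]
        rw [this, hω'm]
      rw [hsc]
      calc t * ‖resolventOp A ((ω':ℂ) * Complex.I)‖ ≤ t * (MA / (d-t)^α) :=
            mul_le_mul_of_nonneg_left hRn ht0.le
        _ = (t * MA) / ((d-t)^α) := by ring
        _ < 1 := (div_lt_one hdtpos).mpr hkey
    exact hres (neumann hres' hsm)
  -- Step 2: the main estimate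
  refine ⟨M0, hM0ge, ?_⟩
  intro k l hre hlz hle
  set σ : ℝ := l.re with hσ
  set δ : ℝ := |l.im - ωk k| with hδ
  set r : ℝ := ‖l - (ωk k : ℂ) * Complex.I‖ with hr
  have him : (l - (ωk k : ℂ) * Complex.I).im = l.im - ωk k := by simp
  have hre' : (l - (ωk k : ℂ) * Complex.I).re = σ := by simp [hσ]
  have hδr : δ ≤ r := by
    calc δ = |(l - (ωk k : ℂ) * Complex.I).im| := by rw [him]
      _ ≤ ‖l - (ωk k : ℂ) * Complex.I‖ := Complex.abs_im_le_norm _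
      _ = r := rfl
  have hσr : σ ≤ r := by
    calc σ = |(l - (ωk k : ℂ) * Complex.I).re| := by rw [hre']; exact (_root_.abs_of_nonneg hre).symm
      _ ≤ ‖l - (ωk k : ℂ) * Complex.I‖ := Complex.abs_re_le_norm _
      _ = r := rfl
  have hrsum : r ≤ σ + δ := by
    calc r = ‖l - (ωk k : ℂ) * Complex.I‖ := rfl
      _ ≤ |(l - (ωk k : ℂ) * Complex.I).re| + |(l - (ωk k : ℂ) * Complex.I).im| :=
          Complex.norm_le_abs_re_add_abs_im _
      _ = σ + δ := by rw [hre', him, _root_.abs_of_nonneg hre]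
  have hδ0 : 0 ≤ δ := abs_nonneg _
  rcases le_or_gt δ σ with hcase | hcase
  · -- case δ ≤ σ : use the Hille-Yosida bound
    have hσpos : 0 < σ := by
      rcases eq_or_lt_of_le hre with h | h
      · exfalso
        have hδz : δ = 0 := le_antisymm (by linarith) hδ0
        linarith
      · exact h
    obtain ⟨R1, hR1, hR1n⟩ := laplace_isRes S A hgen hMb hσpos
    refine ⟨hR1.mem, ?_⟩
    rw [hR1.resolventOp_eq]
    have h1 : r ≤ 2 * σ := by linarith
    have h3 : ((2:ℝ)*σ)^α = 2^α * σ^α := Real.mul_rpow (by norm_num) hσpos.le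
    have h2 : r ^ α ≤ 2^α * σ^α := by
      rw [← h3]
      exact Real.rpow_le_rpow (norm_nonneg _) h1 (by linarith)
    have h4 : σ ^ (α - 1) * σ = σ ^ α := by
      rw [← Real.rpow_add_one hσpos.ne' (α - 1), sub_add_cancel]
    have h5 : σ ^ (α - 1) ≤ E := by
      rw [hE]
      exact Real.rpow_le_rpow hσpos.le
        (le_trans (le_trans hσr hle) (le_max_right 1 εA)) (by linarith)
    calc r ^ α * ‖R1‖ ≤ (2^α * σ^α) * (M / σ) :=
          mul_le_mul h2 hR1n (norm_nonneg _)
            (mul_pos h2pos (Real.rpow_pos_of_pos hσpos α)).le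
      _ = 2^α * σ^(α-1) * M := by
          rw [← h4]
          field_simp
      _ ≤ 2^α * E * M :=
          mul_le_mul_of_nonneg_right (mul_le_mul_of_nonneg_left h5 h2pos.le) hM0
      _ ≤ M0 := by rw [hM0def]; linarith
  · -- case σ < δ : use the boundary bound and the resolvent identity
    have hδpos : 0 < δ := lt_of_le_of_lt hre hcase
    have hδε : δ ≤ εA := le_trans hδr hle
    have hmem0 : ((l.im : ℂ) * Complex.I) ∈ ResolventSet A := himag k l.im hδpos hδε
    have hb0 : δ^α * ‖resolventOp A ((l.im : ℂ) * Complex.I)‖ ≤ MA := hres1 k l.im hδpos hδε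
    have hδα : 0 < δ^α := Real.rpow_pos_of_pos hδpos α
    have hR0n : ‖resolventOp A ((l.im : ℂ) * Complex.I)‖ ≤ MA / δ^α := by
      rw [le_div_iff₀ hδα, mul_comm]
      exact hb0
    rcases eq_or_lt_of_le hre with hσ0 | hσpos
    · -- σ = 0 : l is on the imaginary axis
      have hleq : l = (l.im : ℂ) * Complex.I := by
        apply Complex.ext
        · simpa using hσ0.symm
        · simp
      have hzz : l - (ωk k : ℂ) * Complex.I = ((l.im - ωk k : ℝ) : ℂ) * Complex.I := by
        apply Complex.ext
        · simpa using hσ0.symm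
        · simp
      have hrδ : r = δ := by
        rw [hr, hδ, hzz, norm_mul, Complex.norm_real, Complex.norm_I,
          mul_one, Real.norm_eq_abs]
      have hRleq : resolventOp A l = resolventOp A ((l.im : ℂ) * Complex.I) := by
        rw [← hleq]
      refine ⟨by rw [hleq]; exact hmem0, ?_⟩
      rw [hRleq, hrδ]
      exact le_trans hb0 hMAleM0
    · -- σ > 0
      obtain ⟨R1, hR1, hR1n⟩ := laplace_isRes S A hgen hMb hσpos
      refine ⟨hR1.mem, ?_⟩
      rw [hR1.resolventOp_eq]
      set R0 := resolventOp A ((l.im : ℂ) * Complex.I) with hR0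
      have hid : ∀ x, R1 x = (((l.im : ℂ) * Complex.I) - l) • R0 (R1 x) + R0 x := by
        intro x
        have h := resolvent_identity hR1.mem hmem0 x
        rwa [hR1.resolventOp_eq] at h
      have hμl : ‖((l.im : ℂ) * Complex.I) - l‖ = σ := by
        rw [show ((l.im : ℂ) * Complex.I) - l = ((-σ : ℝ) : ℂ) from by
          apply Complex.ext <;> simp [hσ]]
        rw [Complex.norm_real, Real.norm_eq_abs, abs_neg, _root_.abs_of_pos hσpos]
      have hR1b : ∀ x, ‖R1 x‖ ≤ (1 + M) * ‖R0‖ * ‖x‖ := by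
        intro x
        have h1 : ‖R1 x‖ ≤ σ * (‖R0‖ * ‖R1 x‖) + ‖R0‖ * ‖x‖ := by
          calc ‖R1 x‖ = ‖(((l.im : ℂ) * Complex.I) - l) • R0 (R1 x) + R0 x‖ := by
                rw [← hid x]
            _ ≤ ‖(((l.im : ℂ) * Complex.I) - l) • R0 (R1 x)‖ + ‖R0 x‖ := norm_add_le _ _
            _ ≤ σ * (‖R0‖ * ‖R1 x‖) + ‖R0‖ * ‖x‖ := by
                rw [norm_smul, hμl]
                exact add_le_add (mul_le_mul_of_nonneg_left (R0.le_opNorm _) hσpos.le)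
                  (R0.le_opNorm x)
        have h2 : ‖R1 x‖ ≤ M / σ * ‖x‖ :=
          le_trans (R1.le_opNorm x) (mul_le_mul_of_nonneg_right hR1n (norm_nonneg _))
        have h3 : σ * (‖R0‖ * ‖R1 x‖) ≤ σ * (‖R0‖ * (M / σ * ‖x‖)) :=
          mul_le_mul_of_nonneg_left
            (mul_le_mul_of_nonneg_left h2 (norm_nonneg _)) hσpos.le
        have h4 : σ * (‖R0‖ * (M / σ * ‖x‖)) = M * ‖R0‖ * ‖x‖ := by
          field_simp
        calc ‖R1 x‖ ≤ σ * (‖R0‖ * ‖R1 x‖) + ‖R0‖ * ‖x‖ := h1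
          _ ≤ M * ‖R0‖ * ‖x‖ + ‖R0‖ * ‖x‖ := by rw [← h4]; linarith
          _ = (1 + M) * ‖R0‖ * ‖x‖ := by ring
      have hR1norm : ‖R1‖ ≤ (1 + M) * ‖R0‖ :=
        R1.opNorm_le_bound (mul_nonneg (by linarith) (norm_nonneg _)) hR1b
      have h1 : r ≤ 2 * δ := by linarith
      have h3 : ((2:ℝ)*δ)^α = 2^α * δ^α := Real.mul_rpow (by norm_num) hδpos.le
      have h2 : r ^ α ≤ 2^α * δ^α := by
        rw [← h3]
        exact Real.rpow_le_rpow (norm_nonneg _) h1 (by linarith)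
      have hR1fin : ‖R1‖ ≤ (1 + M) * (MA / δ^α) :=
        le_trans hR1norm (mul_le_mul_of_nonneg_left hR0n (by linarith))
      calc r ^ α * ‖R1‖ ≤ (2^α * δ^α) * ((1 + M) * (MA / δ^α)) :=
            mul_le_mul h2 hR1fin (norm_nonneg _)
              (mul_pos h2pos hδα).le
        _ = 2^α * (1 + M) * MA := by
            field_simp
        _ ≤ M0 := by rw [hM0def]; linarith
end

section
/- Let Ω = {λ ∈ ℂ : |λ + 1| ≤ 1} and let A be the bounded multiplication operator (Af)(μ) = μ f(μ) on X = L²(Ω). Then for α > 0 one has sup_{0<|ω|≤1} |ω|^α ‖R(iω,A)‖ < ∞ if and only if α ≥ 2; in particular |ω|^α ‖R(iω,A)‖ = |ω|^α (√(ω²+1) + 1)/ω² for 0 < |ω| ≤ 1. -/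
open Complex Filter Topology MeasureTheory

open MeasureTheory ENNReal Filter

namespace Stmt16Aux

variable {ν : MeasureTheory.Measure ℂ}

lemma memLp_mul (g : ℂ → ℂ) (hg : Measurable g) (C : NNReal)
    (hbd : ∀ᵐ z ∂ν, ‖g z‖ ≤ C) (f : Lp ℂ 2 ν) :
    MemLp (fun z => g z * f z) 2 ν := by
  refine MemLp.of_le ((Lp.memLp f).const_smul (C : ℂ))
    (hg.aestronglyMeasurable.mul (Lp.aestronglyMeasurable f)) ?_
  filter_upwards [hbd] with z hz
  simp only [Pi.smul_apply, smul_eq_mul, norm_mul]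
  have h1 : ‖(C : ℂ)‖ = (C : ℝ) := by simp
  rw [h1]
  exact mul_le_mul_of_nonneg_right hz (norm_nonneg _)

noncomputable def mulOp (g : ℂ → ℂ) (hg : Measurable g) (C : NNReal)
    (hbd : ∀ᵐ z ∂ν, ‖g z‖ ≤ C) : Lp ℂ 2 ν →L[ℂ] Lp ℂ 2 ν :=
  LinearMap.mkContinuous
    { toFun := fun f => (memLp_mul g hg C hbd f).toLp _
      map_add' := by
        intro f1 f2
        rw [← MemLp.toLp_add]
        refine MemLp.toLp_congr _ _ ?_
        filter_upwards [Lp.coeFn_add f1 f2] with z hz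
        rw [hz, Pi.add_apply, Pi.add_apply]
        ring
      map_smul' := by
        intro c f
        show (memLp_mul g hg C hbd (c • f)).toLp _ = c • (memLp_mul g hg C hbd f).toLp _
        rw [← MemLp.toLp_const_smul c (memLp_mul g hg C hbd f)]
        refine MemLp.toLp_congr (memLp_mul g hg C hbd (c • f))
          ((memLp_mul g hg C hbd f).const_smul c) ?_
        filter_upwards [Lp.coeFn_smul c f] with z hz
        rw [hz, Pi.smul_apply, Pi.smul_apply, smul_eq_mul, smul_eq_mul]
        ring }
    C (by
      intro f
      rw [LinearMap.coe_mk, AddHom.coe_mk, Lp.norm_toLp, Lp.norm_def]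
      have h : ∀ᵐ z ∂ν, ‖g z * f z‖ ≤ (C : ℝ) * ‖f z‖ := by
        filter_upwards [hbd] with z hz
        rw [norm_mul]
        exact mul_le_mul_of_nonneg_right hz (norm_nonneg _)
      have h2 := eLpNorm_le_nnreal_smul_eLpNorm_of_ae_le_mul h 2
      refine (ENNReal.toReal_mono ?_ h2).trans ?_
      · rw [ENNReal.smul_def, smul_eq_mul]
        exact (ENNReal.mul_lt_top ENNReal.coe_lt_top (Lp.eLpNorm_lt_top f)).ne
      · rw [ENNReal.smul_def, smul_eq_mul, ENNReal.toReal_mul, ENNReal.coe_toReal])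

lemma mulOp_coeFn (g : ℂ → ℂ) (hg : Measurable g) (C : NNReal)
    (hbd : ∀ᵐ z ∂ν, ‖g z‖ ≤ C) (f : Lp ℂ 2 ν) :
    ⇑(mulOp g hg C hbd f) =ᵐ[ν] fun z => g z * f z :=
  (memLp_mul g hg C hbd f).coeFn_toLp

lemma mulOp_norm_le (g : ℂ → ℂ) (hg : Measurable g) (C : NNReal)
    (hbd : ∀ᵐ z ∂ν, ‖g z‖ ≤ C) : ‖mulOp g hg C hbd‖ ≤ C :=
  LinearMap.mkContinuous_norm_le _ C.coe_nonneg _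

lemma resolvent_norm (Ω : Set ℂ) (hΩ : Ω = {z : ℂ | ‖z + 1‖ ≤ 1})
    (ν : Measure ℂ) (hν : ν = volume.restrict Ω)
    (A : Lp ℂ 2 ν →L[ℂ] Lp ℂ 2 ν)
    (hA : ∀ f : Lp ℂ 2 ν, A f =ᵐ[ν] fun z => z * f z)
    (ω : ℝ) (hω : ω ≠ 0) :
    ‖resolvent A ((ω : ℂ) * Complex.I)‖ = (Real.sqrt (ω ^ 2 + 1) + 1) / ω ^ 2 := by
  set l : ℂ := (ω : ℂ) * Complex.I with hl
  set s : ℝ := Real.sqrt (ω ^ 2 + 1) with hsdef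
  have hω2 : (0:ℝ) < ω ^ 2 := by positivity
  have hs1 : 1 < s := by
    have h : Real.sqrt 1 < Real.sqrt (ω ^ 2 + 1) := Real.sqrt_lt_sqrt zero_le_one (by linarith)
    simpa [hsdef] using h
  have hs0 : 0 < s := by linarith
  have hss : s ^ 2 = ω ^ 2 + 1 := Real.sq_sqrt (by positivity)
  set d : ℝ := s - 1 with hddef
  have hd : 0 < d := by simp only [hddef]; linarith
  have hl1 : ‖l + 1‖ = s := by
    have h1 : (l + 1).re = 1 := by simp [hl]
    have h2 : (l + 1).im = ω := by simp [hl]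
    rw [Complex.norm_def, Complex.normSq_apply, h1, h2, hsdef]
    ring_nf
  have hball : Ω = Metric.closedBall (-1 : ℂ) 1 := by
    rw [hΩ]; ext z
    simp [Metric.mem_closedBall, Complex.dist_eq, sub_neg_eq_add]
  have hΩmeas : MeasurableSet Ω := by rw [hball]; exact measurableSet_closedBall
  have hae : ∀ᵐ z ∂ν, z ∈ Ω := by rw [hν]; exact ae_restrict_mem hΩmeas
  have hlow : ∀ z ∈ Ω, d ≤ ‖l - z‖ := by
    intro z hz
    rw [hΩ] at hz
    have h3 : ‖l + 1‖ - ‖z + 1‖ ≤ ‖(l + 1) - (z + 1)‖ := norm_sub_norm_le _ _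
    have h4 : (l + 1) - (z + 1) = l - z := by ring
    rw [h4, hl1] at h3
    have h5 : ‖z + 1‖ ≤ 1 := hz
    simp only [hddef]
    linarith
  have hne : ∀ z ∈ Ω, l - z ≠ 0 := by
    intro z hz h0
    have h6 := hlow z hz
    rw [h0, norm_zero] at h6; linarith
  set g : ℂ → ℂ := fun z => (l - z)⁻¹ with hgdef
  have hg : Measurable g := (measurable_const.sub measurable_id).inv
  set C : NNReal := ⟨d⁻¹, by positivity⟩ with hC
  have hbd : ∀ᵐ z ∂ν, ‖g z‖ ≤ C := by
    filter_upwards [hae] with z hz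
    simp only [hgdef, norm_inv]
    exact inv_anti₀ hd (hlow z hz)
  set B := mulOp g hg C hbd with hB
  set e : Lp ℂ 2 ν →L[ℂ] Lp ℂ 2 ν := algebraMap ℂ _ l with he
  have he_apply : ∀ f : Lp ℂ 2 ν, e f = l • f := by
    intro f
    rw [he, Algebra.algebraMap_eq_smul_one, ContinuousLinearMap.smul_apply,
      ContinuousLinearMap.one_apply]
  have h1 : (e - A) * B = 1 := by
    refine ContinuousLinearMap.ext fun f => ?_
    rw [ContinuousLinearMap.mul_apply, ContinuousLinearMap.one_apply]
    have heq : (e - A) (B f) = l • (B f) - A (B f) := by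
      rw [ContinuousLinearMap.sub_apply, he_apply]
    rw [heq]
    refine Lp.ext ?_
    filter_upwards [Lp.coeFn_sub (l • B f) (A (B f)), Lp.coeFn_smul l (B f),
      hA (B f), mulOp_coeFn g hg C hbd f, hae] with z hz1 hz2 hz3 hz4 hz5
    rw [hz1, Pi.sub_apply, hz2, Pi.smul_apply, smul_eq_mul, hz3, hz4]
    have hcz : (l - z) * (l - z)⁻¹ = 1 := mul_inv_cancel₀ (hne z hz5)
    calc l * (g z * f z) - z * (g z * f z) = ((l - z) * (l - z)⁻¹) * f z := by
          simp only [hgdef]; ring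
      _ = f z := by rw [hcz, one_mul]
  have h2 : B * (e - A) = 1 := by
    refine ContinuousLinearMap.ext fun f => ?_
    rw [ContinuousLinearMap.mul_apply, ContinuousLinearMap.one_apply]
    have heq : (e - A) f = l • f - A f := by
      rw [ContinuousLinearMap.sub_apply, he_apply]
    rw [heq]
    refine Lp.ext ?_
    filter_upwards [mulOp_coeFn g hg C hbd (l • f - A f),
      Lp.coeFn_sub (l • f) (A f), Lp.coeFn_smul l f, hA f, hae]
      with z hz1 hz2 hz3 hz4 hz5
    rw [hz1, hz2, Pi.sub_apply, hz3, Pi.smul_apply, smul_eq_mul, hz4]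
    have hcz : (l - z)⁻¹ * (l - z) = 1 := inv_mul_cancel₀ (hne z hz5)
    calc g z * (l * f z - z * f z) = ((l - z)⁻¹ * (l - z)) * f z := by
          simp only [hgdef]; ring
      _ = f z := by rw [hcz, one_mul]
  have hres : resolvent A l = B := by
    have hstep : resolvent A l = Ring.inverse (e - A) := rfl
    rw [hstep]
    exact Ring.inverse_unit ⟨e - A, B, h1, h2⟩
  -- lower bound on the norm of B
  have hlower : ∀ δ : ℝ, 0 < δ → (d + δ)⁻¹ ≤ ‖B‖ := by
    intro δ hδ
    have hdd : (0:ℝ) < d + δ := by linarith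
    set p : ℂ := -1 + (l + 1) / (s : ℂ) with hp
    have hsne : (s : ℂ) ≠ 0 := by exact_mod_cast hs0.ne'
    have hp1 : ‖p + 1‖ = 1 := by
      have h : p + 1 = (l + 1) / (s : ℂ) := by rw [hp]; ring
      rw [h, norm_div, hl1, Complex.norm_real, Real.norm_eq_abs, _root_.abs_of_pos hs0,
        div_self hs0.ne']
    have hlp : ‖l - p‖ = d := by
      have h : l - p = (l + 1) * (1 - (s : ℂ)⁻¹) := by
        rw [hp]; field_simp; ring
      have h2 : (1 - (s:ℂ)⁻¹) = ((1 - s⁻¹ : ℝ) : ℂ) := by push_cast; ring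
      rw [h, norm_mul, hl1, h2, Complex.norm_real, Real.norm_eq_abs,
        _root_.abs_of_nonneg (by rw [sub_nonneg]; exact inv_le_one_of_one_le₀ hs1.le)]
      simp only [hddef]
      field_simp
    have hpc : p ∈ closure (Metric.ball (-1 : ℂ) 1) := by
      rw [closure_ball (-1 : ℂ) one_ne_zero]
      rw [Metric.mem_closedBall, dist_eq_norm, sub_neg_eq_add, hp1]
    obtain ⟨q, hq1, hq2⟩ := (_root_.mem_closure_iff.mp hpc) (Metric.ball p δ)
      Metric.isOpen_ball (Metric.mem_ball_self hδ)
    set t : Set ℂ := Ω ∩ Metric.ball p δ with htdef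
    have ht : MeasurableSet t := hΩmeas.inter measurableSet_ball
    have htpos : 0 < ν t := by
      rw [hν, Measure.restrict_apply ht]
      have hsub : Metric.ball p δ ∩ Metric.ball (-1:ℂ) 1 ⊆ t ∩ Ω := by
        intro x hx
        have hxΩ : x ∈ Ω := by rw [hball]; exact Metric.ball_subset_closedBall hx.2
        exact ⟨⟨hxΩ, hx.1⟩, hxΩ⟩
      refine lt_of_lt_of_le ?_ (measure_mono hsub)
      exact (Metric.isOpen_ball.inter Metric.isOpen_ball).measure_pos volume ⟨q, hq1, hq2⟩
    have htne : ν t ≠ ⊤ := by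
      rw [hν, Measure.restrict_apply ht]
      exact (lt_of_le_of_lt (measure_mono (fun x hx => hx.1.2)) measure_ball_lt_top).ne
    set f := indicatorConstLp 2 ht htne (1 : ℂ) with hf
    have hfpos : 0 < ‖f‖ := by
      rw [hf, norm_indicatorConstLp (by norm_num) (by norm_num)]
      have h0 := ENNReal.toReal_pos htpos.ne' htne
      simp only [norm_one, one_mul]
      exact Real.rpow_pos_of_pos h0 _
    have hind : ⇑f =ᵐ[ν] t.indicator (fun _ => (1:ℂ)) := indicatorConstLp_coeFn
    have key : (d + δ)⁻¹ * ‖f‖ ≤ ‖B f‖ := by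
      have hnorm_smul : ‖(((d + δ)⁻¹ : ℝ) : ℂ) • f‖ = (d + δ)⁻¹ * ‖f‖ := by
        rw [norm_smul, Complex.norm_real, Real.norm_eq_abs, _root_.abs_of_pos (by positivity)]
      rw [← hnorm_smul, Lp.norm_def, Lp.norm_def]
      refine ENNReal.toReal_mono (Lp.eLpNorm_ne_top _) (eLpNorm_mono_ae ?_)
      filter_upwards [Lp.coeFn_smul (((d + δ)⁻¹ : ℝ) : ℂ) f,
        mulOp_coeFn g hg C hbd f, hind, hae] with z hz1 hz2 hz3 hz4
      rw [hz1, Pi.smul_apply, smul_eq_mul, hz2, hz3]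
      by_cases hzt : z ∈ t
      · rw [Set.indicator_of_mem hzt]
        have hzb : z ∈ Metric.ball p δ := hzt.2
        have hle : ‖l - z‖ ≤ d + δ := by
          have hsplit : l - z = (l - p) + (p - z) := by ring
          rw [hsplit]
          refine (norm_add_le _ _).trans ?_
          rw [hlp]
          have hpz : ‖p - z‖ ≤ δ := by
            rw [← dist_eq_norm, dist_comm]
            exact le_of_lt (Metric.mem_ball.mp hzb)
          linarith
        have h0 : 0 < ‖l - z‖ := lt_of_lt_of_le hd (hlow z hzt.1)
        have hinv : (d + δ)⁻¹ ≤ ‖l - z‖⁻¹ := inv_anti₀ h0 hle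
        simp only [mul_one, hgdef, norm_inv, Complex.norm_real, Real.norm_eq_abs,
          _root_.abs_inv, _root_.abs_of_pos hdd]
        exact hinv
      · rw [Set.indicator_of_notMem hzt]
        simp
    have h5 : (d + δ)⁻¹ * ‖f‖ ≤ ‖B‖ * ‖f‖ := key.trans (B.le_opNorm f)
    exact le_of_mul_le_mul_right h5 hfpos
  have hlb : d⁻¹ ≤ ‖B‖ := by
    have hcont : Tendsto (fun δ : ℝ => (d + δ)⁻¹) (nhdsWithin 0 (Set.Ioi 0)) (nhds d⁻¹) := by
      have h1' : Tendsto (fun δ : ℝ => d + δ) (nhds 0) (nhds d) := by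
        exact Continuous.tendsto' (by fun_prop) 0 d (by simp)
      exact (h1'.inv₀ hd.ne').mono_left nhdsWithin_le_nhds
    exact le_of_tendsto hcont (eventually_nhdsWithin_of_forall fun δ hδ => hlower δ hδ)
  have hub : ‖B‖ ≤ d⁻¹ := mulOp_norm_le g hg C hbd
  have hnorm : ‖B‖ = d⁻¹ := le_antisymm hub hlb
  have harith : d⁻¹ = (s + 1) / ω ^ 2 := by
    rw [eq_div_iff (ne_of_gt hω2), inv_mul_eq_div, div_eq_iff (ne_of_gt hd)]
    simp only [hddef]
    nlinarith [hss]
  rw [hres, hnorm, harith]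

end Stmt16Aux

/-- For the multiplication operator `(Af)(μ) = μ f(μ)` on `L²(Ω)` with
`Ω` the closed unit disk centered at `-1`, the bound `sup_{0<|ω|≤1} |ω|^α ‖R(iω,A)‖ < ∞`
holds if and only if `α ≥ 2`, and
`|ω|^α ‖R(iω,A)‖ = |ω|^α (√(ω²+1)+1)/ω²` for `0 < |ω| ≤ 1`. -/
theorem stmt16
    (Ω : Set ℂ) (hΩ : Ω = {z : ℂ | ‖z + 1‖ ≤ 1})
    (ν : Measure ℂ) (hν : ν = volume.restrict Ω)
    (A : Lp ℂ 2 ν →L[ℂ] Lp ℂ 2 ν)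
    (hA : ∀ f : Lp ℂ 2 ν, A f =ᵐ[ν] fun z => z * f z)
    (α : ℝ) (hα : 0 < α) :
    ((∃ M : ℝ, ∀ ω : ℝ, 0 < |ω| → |ω| ≤ 1 →
        |ω| ^ α * ‖resolvent A ((ω : ℂ) * Complex.I)‖ ≤ M) ↔ 2 ≤ α) ∧
    (∀ ω : ℝ, 0 < |ω| → |ω| ≤ 1 →
      |ω| ^ α * ‖resolvent A ((ω : ℂ) * Complex.I)‖ =
        |ω| ^ α * (Real.sqrt (ω ^ 2 + 1) + 1) / ω ^ 2) := by
  have key : ∀ ω : ℝ, ω ≠ 0 → ‖resolvent A ((ω : ℂ) * Complex.I)‖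
      = (Real.sqrt (ω ^ 2 + 1) + 1) / ω ^ 2 :=
    fun ω hw => Stmt16Aux.resolvent_norm Ω hΩ ν hν A hA ω hw
  constructor
  · constructor
    · rintro ⟨M, hM⟩
      by_contra hlt
      push_neg at hlt
      have hε : 0 < 2 - α := by linarith
      have hM0 : 0 ≤ M := by
        have h1 := hM 1 (by norm_num) (by norm_num)
        have h2 : 0 ≤ |(1:ℝ)| ^ α * ‖resolvent A (((1:ℝ) : ℂ) * Complex.I)‖ := by positivity
        linarith
      have hr0 : 0 < (1/(M+2) : ℝ) := by positivity
      set x : ℝ := min 1 ((1/(M+2)) ^ ((2 - α)⁻¹)) with hx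
      have hx0 : 0 < x := lt_min one_pos (Real.rpow_pos_of_pos hr0 _)
      have hx1 : x ≤ 1 := min_le_left _ _
      have hxe : x ^ (2 - α) ≤ 1/(M+2) := by
        calc x ^ (2-α) ≤ ((1/(M+2)) ^ ((2-α)⁻¹)) ^ (2-α) :=
              Real.rpow_le_rpow hx0.le (min_le_right _ _) hε.le
          _ = 1/(M+2) := by
              rw [← Real.rpow_mul hr0.le, inv_mul_cancel₀ hε.ne', Real.rpow_one]
      have habs : |x| = x := _root_.abs_of_pos hx0
      have hMx := hM x (by rw [habs]; exact hx0) (by rw [habs]; exact hx1)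
      rw [key x hx0.ne', habs] at hMx
      have hsq : 2 ≤ Real.sqrt (x^2+1) + 1 := by
        have h3 : Real.sqrt 1 ≤ Real.sqrt (x^2+1) := Real.sqrt_le_sqrt (by nlinarith)
        rw [Real.sqrt_one] at h3
        linarith
      have e1 : x ^ α / x ^ 2 = x ^ (α - 2) := by
        rw [← Real.rpow_natCast x 2, ← Real.rpow_sub hx0]
        norm_num
      have e2 : x ^ (α - 2) = (x ^ (2 - α))⁻¹ := by
        rw [← Real.rpow_neg hx0.le, neg_sub]
      have hinv : (M + 2) ≤ (x ^ (2-α))⁻¹ := by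
        have h4 := inv_anti₀ (Real.rpow_pos_of_pos hx0 (2-α)) hxe
        rwa [one_div, inv_inv] at h4
      have e3 : x ^ α * ((Real.sqrt (x^2+1)+1) / x^2)
          = (Real.sqrt (x^2+1)+1) * (x^α / x^2) := by ring
      have hge : 2 * (M+2) ≤ x ^ α * ((Real.sqrt (x^2+1)+1) / x^2) := by
        rw [e3, e1, e2]
        calc 2*(M+2) ≤ 2 * (x^(2-α))⁻¹ := by nlinarith [hinv]
          _ ≤ (Real.sqrt (x^2+1)+1) * (x^(2-α))⁻¹ :=
              mul_le_mul_of_nonneg_right hsq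
                (inv_nonneg.mpr (Real.rpow_nonneg hx0.le _))
      linarith [hMx, hge, hM0]
    · intro hαge
      refine ⟨3, fun ω h0 h1 => ?_⟩
      have hω : ω ≠ 0 := by
        intro h; rw [h] at h0; simp at h0
      rw [key ω hω]
      have habs : (0:ℝ) < |ω| := h0
      have hsqle : Real.sqrt (ω^2+1) + 1 ≤ 3 := by
        have hω2 : ω^2 ≤ 1 := by nlinarith [_root_.sq_abs ω]
        have h2 : Real.sqrt (ω^2+1) ≤ 2 := by
          nlinarith [Real.sq_sqrt (show (0:ℝ) ≤ ω^2+1 by positivity),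
            Real.sqrt_nonneg (ω^2+1)]
        linarith
      have hpow2 : ω^2 = |ω| ^ ((2:ℝ)) := by
        rw [show ((2:ℝ)) = ((2:ℕ):ℝ) by norm_num, Real.rpow_natCast, _root_.sq_abs]
      have e1 : |ω| ^ α * ((Real.sqrt (ω^2+1)+1) / ω^2)
          = |ω| ^ (α-2) * (Real.sqrt (ω^2+1)+1) := by
        rw [hpow2, Real.rpow_sub habs]
        ring
      have hr : |ω| ^ (α-2) ≤ 1 := Real.rpow_le_one (abs_nonneg ω) h1 (by linarith)
      calc |ω| ^ α * ((Real.sqrt (ω^2+1)+1) / ω^2)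
          = |ω| ^ (α-2) * (Real.sqrt (ω^2+1)+1) := e1
        _ ≤ 1 * 3 := mul_le_mul hr hsqle (by positivity) one_pos.le
        _ = 3 := one_mul 3
  · intro ω h0 h1
    have hω : ω ≠ 0 := by
      intro h; rw [h] at h0; simp at h0
    rw [key ω hω, mul_div_assoc]
end

section
/- Let Ω = {λ ∈ ℂ : |λ + 1| ≤ 1} and let A be the bounded multiplication operator (Af)(μ) = μ f(μ) on X = L²(Ω). Then for all λ with Re λ ≥ 0 and λ ≠ 0 one has ‖(−A)² R(λ,A)‖ ≤ 8, i.e. ‖A² R(λ,A)‖ ≤ 8. -/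
open Complex Filter Topology MeasureTheory

section Stmt17Aux
open MeasureTheory

variable {ν : Measure ℂ}

private lemma stmt17_memℒp_mul (m : ℂ → ℂ) (hm : AEStronglyMeasurable m ν) {C : ℝ}
    (hb : ∀ᵐ z ∂ν, ‖m z‖ ≤ C) (f : Lp ℂ 2 ν) :
    MemLp (fun z => m z * f z) 2 ν := by
  refine MemLp.of_le_mul (c := C) (Lp.memLp f) (hm.mul (Lp.aestronglyMeasurable f)) ?_
  filter_upwards [hb] with z hz
  rw [norm_mul]
  exact mul_le_mul_of_nonneg_right hz (norm_nonneg _)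

noncomputable def stmt17_mulCLM (m : ℂ → ℂ) (hm : AEStronglyMeasurable m ν) (C : ℝ) (hC : 0 ≤ C)
    (hb : ∀ᵐ z ∂ν, ‖m z‖ ≤ C) : Lp ℂ 2 ν →L[ℂ] Lp ℂ 2 ν :=
  LinearMap.mkContinuous
    { toFun := fun f => (stmt17_memℒp_mul m hm hb f).toLp _
      map_add' := fun f g => by
        exact (MemLp.toLp_congr (stmt17_memℒp_mul m hm hb (f + g))
            ((stmt17_memℒp_mul m hm hb f).add (stmt17_memℒp_mul m hm hb g))
            (by filter_upwards [Lp.coeFn_add f g] with z hz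
                simp only [hz, Pi.add_apply, mul_add])).trans
          (MemLp.toLp_add _ _)
      map_smul' := fun c f => by
        rw [RingHom.id_apply]
        exact (MemLp.toLp_congr (stmt17_memℒp_mul m hm hb (c • f))
            ((stmt17_memℒp_mul m hm hb f).const_smul c)
            (by filter_upwards [Lp.coeFn_smul c f] with z hz
                simp only [hz, Pi.smul_apply, smul_eq_mul]
                ring)).trans (MemLp.toLp_const_smul c (stmt17_memℒp_mul m hm hb f)) }
    C
    (fun f => by
      have h1 : ‖((stmt17_memℒp_mul m hm hb f).toLp _ : Lp ℂ 2 ν)‖ ≤ ‖((C : ℂ) • f : Lp ℂ 2 ν)‖ := by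
        apply Lp.norm_le_norm_of_ae_le
        filter_upwards [MemLp.coeFn_toLp (stmt17_memℒp_mul m hm hb f),
          Lp.coeFn_smul (C : ℂ) f, hb] with z e1 e2 hz
        rw [e1, e2, Pi.smul_apply, smul_eq_mul, norm_mul, norm_mul, Complex.norm_real,
          Real.norm_eq_abs, _root_.abs_of_nonneg hC]
        exact mul_le_mul_of_nonneg_right hz (norm_nonneg _)
      calc ‖((stmt17_memℒp_mul m hm hb f).toLp _ : Lp ℂ 2 ν)‖ ≤ ‖((C : ℂ) • f : Lp ℂ 2 ν)‖ := h1
        _ = C * ‖f‖ := by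
          rw [norm_smul, Complex.norm_real, Real.norm_eq_abs, _root_.abs_of_nonneg hC])

lemma stmt17_mulCLM_apply (m : ℂ → ℂ) (hm : AEStronglyMeasurable m ν) (C : ℝ) (hC : 0 ≤ C)
    (hb : ∀ᵐ z ∂ν, ‖m z‖ ≤ C) (f : Lp ℂ 2 ν) :
    (stmt17_mulCLM m hm C hC hb f : Lp ℂ 2 ν) =ᵐ[ν] fun z => m z * f z := by
  have h : (stmt17_mulCLM m hm C hC hb f : Lp ℂ 2 ν)
      = (stmt17_memℒp_mul m hm hb f).toLp _ := rfl
  rw [h]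
  exact MemLp.coeFn_toLp (stmt17_memℒp_mul m hm hb f)

end Stmt17Aux

/-- For the multiplication operator `(Af)(μ) = μ f(μ)` on `L²(Ω)` with
`Ω` the closed unit disk centered at `-1`, one has `‖A² R(λ,A)‖ ≤ 8` for all `λ ≠ 0` in the
closed right half-plane. -/
theorem stmt17
    (Ω : Set ℂ) (hΩ : Ω = {z : ℂ | ‖z + 1‖ ≤ 1})
    (ν : Measure ℂ) (hν : ν = volume.restrict Ω)
    (A : Lp ℂ 2 ν →L[ℂ] Lp ℂ 2 ν)
    (hA : ∀ f : Lp ℂ 2 ν, A f =ᵐ[ν] fun z => z * f z) :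
    ∀ l : ℂ, 0 ≤ l.re → l ≠ 0 → ‖(A ^ 2) * resolvent A l‖ ≤ 8 := by
  intro l hlre hl0
  have hΩm : MeasurableSet Ω := by
    rw [hΩ]
    exact (isClosed_le ((continuous_id.add continuous_const).norm) continuous_const).measurableSet
  have hmem' : ∀ᵐ z ∂ν, ‖z + 1‖ ≤ 1 := by
    rw [hν]
    filter_upwards [ae_restrict_mem hΩm] with z hz
    rwa [hΩ] at hz
  have hsq : ∀ w : ℂ, ‖w‖ ^ 2 = w.re * w.re + w.im * w.im := fun w => by
    rw [Complex.sq_norm, Complex.normSq_apply]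
  have hdisk : ∀ z : ℂ, ‖z + 1‖ ≤ 1 → ‖z‖ ^ 2 ≤ -(2 * z.re) := by
    intro z hz
    have h1 : ‖z + 1‖ ^ 2 ≤ 1 := by nlinarith [norm_nonneg (z + 1)]
    have h2 := hsq (z + 1)
    have h3 := hsq z
    simp only [Complex.add_re, Complex.add_im, Complex.one_re, Complex.one_im, add_zero] at h2
    nlinarith
  have hne : ∀ z : ℂ, ‖z + 1‖ ≤ 1 → l - z ≠ 0 := by
    intro z hz h
    have hzl : z = l := (sub_eq_zero.mp h).symm
    have h1 := hdisk z hz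
    have h2 : ‖z‖ ^ 2 ≤ 0 := by rw [hzl]; rw [hzl] at h1; linarith
    have hz0 : z = 0 := by
      have h3 := norm_nonneg z
      have h4 : ‖z‖ = 0 := by nlinarith
      exact norm_eq_zero.mp h4
    exact hl0 (by rw [← hzl]; exact hz0)
  have hkey : ∀ z : ℂ, ‖z + 1‖ ≤ 1 → ‖z‖ ^ 2 ≤ 2 * ‖l - z‖ := by
    intro z hz
    have h1 := hdisk z hz
    have h2 : (l - z).re ≤ ‖l - z‖ := by
      exact Complex.re_le_norm _
    have h3 : (l - z).re = l.re - z.re := Complex.sub_re l z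
    linarith
  have hCpos : 0 < ‖l + 1‖ - 1 := by
    have h0 : 0 < ‖l‖ := norm_pos_iff.mpr hl0
    have h1 := hsq l
    have h2 := hsq (l + 1)
    simp only [Complex.add_re, Complex.add_im, Complex.one_re, Complex.one_im, add_zero] at h2
    have h3 : 1 < ‖l + 1‖ ^ 2 := by nlinarith
    nlinarith [norm_nonneg (l + 1)]
  have hm : AEStronglyMeasurable (fun z : ℂ => (l - z)⁻¹) ν :=
    ((measurable_const.sub measurable_id).inv).aestronglyMeasurable
  have hRb : ∀ᵐ z ∂ν, ‖(l - z)⁻¹‖ ≤ (‖l + 1‖ - 1)⁻¹ := by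
    filter_upwards [hmem'] with z hz
    rw [norm_inv]
    have hle : ‖l + 1‖ - 1 ≤ ‖l - z‖ := by
      have h1 : ‖l + 1‖ - ‖z + 1‖ ≤ ‖(l + 1) - (z + 1)‖ := norm_sub_norm_le _ _
      have h2 : (l + 1) - (z + 1) = l - z := by ring
      rw [h2] at h1
      linarith
    exact inv_anti₀ hCpos hle
  have hCnn : (0 : ℝ) ≤ (‖l + 1‖ - 1)⁻¹ := by positivity
  set R : Lp ℂ 2 ν →L[ℂ] Lp ℂ 2 ν :=
    stmt17_mulCLM (fun z : ℂ => (l - z)⁻¹) hm ((‖l + 1‖ - 1)⁻¹) hCnn hRb with hRdef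
  have hR : ∀ f : Lp ℂ 2 ν, (R f : Lp ℂ 2 ν) =ᵐ[ν] fun z => (l - z)⁻¹ * f z := fun f =>
    stmt17_mulCLM_apply (fun z : ℂ => (l - z)⁻¹) hm ((‖l + 1‖ - 1)⁻¹) hCnn hRb f
  have halg : ∀ f : Lp ℂ 2 ν, (algebraMap ℂ (Lp ℂ 2 ν →L[ℂ] Lp ℂ 2 ν) l) f = l • f := by
    intro f
    simp [Algebra.algebraMap_eq_smul_one]
  have h1 : (algebraMap ℂ (Lp ℂ 2 ν →L[ℂ] Lp ℂ 2 ν) l - A) * R = 1 := by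
    ext f
    simp only [ContinuousLinearMap.mul_apply, ContinuousLinearMap.sub_apply,
      ContinuousLinearMap.one_apply, halg]
    filter_upwards [Lp.coeFn_sub (l • R f) (A (R f)), Lp.coeFn_smul l (R f),
      hA (R f), hR f, hmem'] with z e1 e2 e3 e4 hz
    rw [e1, Pi.sub_apply, e2, Pi.smul_apply, smul_eq_mul, e3, e4]
    have hnz := hne z hz
    field_simp
  have h2 : R * (algebraMap ℂ (Lp ℂ 2 ν →L[ℂ] Lp ℂ 2 ν) l - A) = 1 := by
    ext f
    simp only [ContinuousLinearMap.mul_apply, ContinuousLinearMap.sub_apply,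
      ContinuousLinearMap.one_apply, halg]
    filter_upwards [hR (l • f - A f), Lp.coeFn_sub (l • f) (A f), Lp.coeFn_smul l f,
      hA f, hmem'] with z e1 e2 e3 e4 hz
    rw [e1, e2, Pi.sub_apply, e3, Pi.smul_apply, smul_eq_mul, e4]
    have hnz := hne z hz
    field_simp
  have hres : resolvent A l = R :=
    Ring.inverse_unit ⟨algebraMap ℂ (Lp ℂ 2 ν →L[ℂ] Lp ℂ 2 ν) l - A, R, h1, h2⟩
  rw [hres]
  refine ContinuousLinearMap.opNorm_le_bound _ (by norm_num) fun f => ?_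
  have heq : ((A ^ 2 * R) f : Lp ℂ 2 ν) = A (A (R f)) := by
    simp [pow_two, ContinuousLinearMap.mul_apply]
  rw [heq]
  have hb : ‖A (A (R f))‖ ≤ ‖((2 : ℂ) • f : Lp ℂ 2 ν)‖ := by
    apply Lp.norm_le_norm_of_ae_le
    filter_upwards [hA (A (R f)), hA (R f), hR f, Lp.coeFn_smul (2 : ℂ) f, hmem']
      with z e1 e2 e3 e4 hz
    rw [e1, e2, e3, e4, Pi.smul_apply, smul_eq_mul]
    have hpos : 0 < ‖l - z‖ := norm_pos_iff.mpr (hne z hz)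
    have hk := hkey z hz
    have hfz := norm_nonneg (f z)
    have hznn := norm_nonneg z
    rw [norm_mul, norm_mul, norm_mul, norm_mul, norm_inv]
    have h2n : ‖(2 : ℂ)‖ = 2 := by simp
    rw [h2n]
    rw [show ‖z‖ * (‖z‖ * (‖l - z‖⁻¹ * ‖f z‖)) = ‖z‖ ^ 2 * ‖f z‖ / ‖l - z‖ by
      field_simp]
    rw [div_le_iff₀ hpos]
    nlinarith
  calc ‖A (A (R f))‖ ≤ ‖((2 : ℂ) • f : Lp ℂ 2 ν)‖ := hb
    _ = 2 * ‖f‖ := by rw [norm_smul]; simp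
    _ ≤ 8 * ‖f‖ := by nlinarith [norm_nonneg f]
end
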